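/- Soundness of abstract interpretation is a data refinement: given γ : S♯ → P(S), a monotone predicate transformer p : P(S) → P(S), and p♯ : S♯ → S♯, the refinement (p♯)^{-1} ⊑_{⟨γ⟩} p (i.e. ⟨γ⟩;(p♯)^{-1} ⊑ p;⟨γ⟩, equivalently (p♯)^{-1};[γ] ⊑ [γ];p) holds if and only if for all s♯ ∈ S♯, γ(s♯) ⊆ p(γ(p♯(s♯))). -/

import Mathlib

/-- Soundness of forward abstract interpretation as a data refinement:
    ⟨γ⟩;(p♯)⁻¹ ⊑ p;⟨γ⟩ iff ∀ s♯, γ(s♯) ⊆ p(γ(p♯(s♯))). -/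
theorem ai_soundness_refinement {S Sharp : Type*}
    (γ : Sharp → Set S) (p : Set S → Set S) (hp : Monotone p)
    (psharp : Sharp → Sharp) :
    (∀ X : Set Sharp, (⋃ s ∈ psharp ⁻¹' X, γ s) ⊆ p (⋃ s ∈ X, γ s))
      ↔ (∀ s : Sharp, γ s ⊆ p (γ (psharp s))) := by
  constructor
  · intro h s
    have := h {psharp s}
    simpa [Set.subset_def] using fun x hx => this (Set.mem_biUnion (by simp) hx)
  · intro h X x hx
    rcases Set.mem_iUnion₂.1 hx with ⟨s, hs, hxs⟩
    have : γ (psharp s) ⊆ ⋃ t ∈ X, γ t := Set.subset_biUnion_of_mem hs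
    exact hp this (h s hxs)
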